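/- Let n_x, n_y ≥ 1 be natural numbers and N = n_x + n_y. For a permutation π of {1,...,N}, define the distance d(π) = n_x − |{i ∈ {1,...,n_x} : π(i) ≤ n_x}|. Then for every m with 0 ≤ m ≤ min(n_x, n_y), the number of permutations π of {1,...,N} with d(π) = m equals C(n_x, m) · C(n_y, m) · n_x! · n_y!, where C(n, k) denotes the binomial coefficient. -/

import Mathlib

open Finset

/-- Distance between a permutation and the observed ordering: the number of the
first `nx` indices that `π` maps outside the first `nx` positions. -/
def pdist (nx ny : ℕ) (π : Equiv.Perm (Fin (nx + ny))) : ℕ :=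
  nx - (Finset.univ.filter (fun i : Fin nx => ((π (Fin.castAdd ny i)) : ℕ) < nx)).card

/-- The partition `Π(m)`: the set of permutations at distance `m`. -/
def PartM (nx ny m : ℕ) : Finset (Equiv.Perm (Fin (nx + ny))) :=
  Finset.univ.filter (fun π => pdist nx ny π = m)

/-- Expectation of `f` under the uniform distribution on a finite set `s`. -/
noncomputable def uexp {α : Type*} (s : Finset α) (f : α → ℝ) : ℝ :=
  (∑ a ∈ s, f a) / s.card

/-- Variance of `f` under the uniform distribution on a finite set `s`. -/
noncomputable def fvar {α : Type*} (s : Finset α) (f : α → ℝ) : ℝ :=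
  uexp s (fun a => (f a - uexp s f) ^ 2)

/-- Covariance of `f` and `g` under the uniform distribution on a finite set `s`. -/
noncomputable def fcov {α : Type*} (s : Finset α) (f g : α → ℝ) : ℝ :=
  uexp s (fun a => (f a - uexp s f) * (g a - uexp s g))

/-- Indicator that observation `i` of group x is exchanged out of group x under `π`. -/
def deltaX (nx ny : ℕ) (π : Equiv.Perm (Fin (nx + ny))) (i : Fin nx) : ℝ :=
  if nx ≤ ((π (Fin.castAdd ny i)) : ℕ) then 1 else 0

/-- Indicator that observation `j` of group y is exchanged into group x under `π`. -/
def deltaY (nx ny : ℕ) (π : Equiv.Perm (Fin (nx + ny))) (j : Fin ny) : ℝ :=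
  if ((π (Fin.natAdd nx j)) : ℕ) < nx then 1 else 0

/-- Sum of the x-observations exchanged out of group x. -/
noncomputable def Wx (nx ny : ℕ) (x : Fin nx → ℝ) (π : Equiv.Perm (Fin (nx + ny))) : ℝ :=
  ∑ i : Fin nx, deltaX nx ny π i * x i

/-- Sum of the y-observations exchanged into group x. -/
noncomputable def Wy (nx ny : ℕ) (y : Fin ny → ℝ) (π : Equiv.Perm (Fin (nx + ny))) : ℝ :=
  ∑ j : Fin ny, deltaY nx ny π j * y j

/-- Mean of the first `nx` entries of the permuted dataset `z*` (where `z*_{π i} = z i`). -/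
noncomputable def xstar (nx ny : ℕ) (z : Fin (nx + ny) → ℝ) (π : Equiv.Perm (Fin (nx + ny))) : ℝ :=
  (∑ i : Fin nx, z (π.symm (Fin.castAdd ny i))) / nx

/-- Mean of the last `ny` entries of the permuted dataset `z*` (where `z*_{π i} = z i`). -/
noncomputable def ystar (nx ny : ℕ) (z : Fin (nx + ny) → ℝ) (π : Equiv.Perm (Fin (nx + ny))) : ℝ :=
  (∑ j : Fin ny, z (π.symm (Fin.natAdd nx j))) / ny

/-- `W(π) = W_y(π) - W_x(π)` computed from the pooled data `z`. -/
noncomputable def WZ (nx ny : ℕ) (z : Fin (nx + ny) → ℝ) (π : Equiv.Perm (Fin (nx + ny))) : ℝ :=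
  (∑ j : Fin ny, deltaY nx ny π j * z (Fin.natAdd nx j))
    - (∑ i : Fin nx, deltaX nx ny π i * z (Fin.castAdd ny i))


open Finset

variable {nx ny : ℕ}

lemma castAdd_inj : Function.Injective (Fin.castAdd (n := nx) ny) := by
  intro a b h
  have h2 := congrArg Fin.val h
  simp only [Fin.coe_castAdd] at h2
  exact Fin.ext h2

/-- image of the first block under π -/
def blockS (nx ny : ℕ) (π : Equiv.Perm (Fin (nx + ny))) : Finset (Fin (nx + ny)) :=
  (Finset.univ : Finset (Fin nx)).image (fun i => π (Fin.castAdd ny i))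

lemma blockS_card (π : Equiv.Perm (Fin (nx + ny))) : (blockS nx ny π).card = nx := by
  rw [blockS, Finset.card_image_of_injective _ (fun a b h => castAdd_inj (π.injective h))]
  simp

lemma fiber_card (S : Finset (Fin (nx + ny))) (hS : S.card = nx) :
    (Finset.univ.filter (fun π : Equiv.Perm (Fin (nx + ny)) => blockS nx ny π = S)).card
      = Nat.factorial nx * Nat.factorial ny := by
  classical
  have hSc : (Sᶜ).card = ny := by
    rw [Finset.card_compl, hS, Fintype.card_fin]; omega
  -- equivs
  let eSx : Fin nx ≃ ↥S := (S.equivFin.trans (finCongr hS)).symm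
  let eSy : Fin ny ≃ {x : Fin (nx+ny) // ¬ x ∈ S} :=
    ((Sᶜ).equivFin.trans (finCongr hSc)).symm.trans
      (Equiv.subtypeEquivRight (fun x => Finset.mem_compl))
  let b : (Fin nx ⊕ Fin ny) ≃ Fin (nx + ny) :=
    (Equiv.sumCongr eSx eSy).trans (Equiv.sumCompl (· ∈ S))
  have hb_inl : ∀ i : Fin nx, b (Sum.inl i) = (eSx i : Fin (nx+ny)) := fun i => rfl
  have hb_inr : ∀ j : Fin ny, b (Sum.inr j) = ((eSy j : {x // ¬ x ∈ S}) : Fin (nx+ny)) := fun j => rfl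
  let Φ : Equiv.Perm (Fin nx) × Equiv.Perm (Fin ny) → Equiv.Perm (Fin (nx + ny)) :=
    fun p => (finSumFinEquiv.symm.trans ((Equiv.sumCongr p.1 p.2).trans b))
  have hΦ_castAdd : ∀ p (i : Fin nx), Φ p (Fin.castAdd ny i) = (eSx (p.1 i) : Fin (nx+ny)) := by
    intro p i
    simp [Φ, finSumFinEquiv_symm_apply_castAdd, hb_inl]
  have hΦ_natAdd : ∀ p (j : Fin ny),
      Φ p (Fin.natAdd nx j) = ((eSy (p.2 j) : {x // ¬ x ∈ S}) : Fin (nx+ny)) := by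
    intro p j
    simp [Φ, finSumFinEquiv_symm_apply_natAdd, hb_inr]
  have hΦ_mem : ∀ p, blockS nx ny (Φ p) = S := by
    intro p
    ext k
    simp only [blockS, Finset.mem_image, Finset.mem_univ, true_and]
    constructor
    · rintro ⟨i, rfl⟩
      rw [hΦ_castAdd]; exact (eSx (p.1 i)).2
    · intro hk
      refine ⟨p.1.symm (eSx.symm ⟨k, hk⟩), ?_⟩
      rw [hΦ_castAdd]; simp
  -- membership lemmas for forward direction
  have mem1 : ∀ (π : Equiv.Perm (Fin (nx+ny))), blockS nx ny π = S →
      ∀ i : Fin nx, π (Fin.castAdd ny i) ∈ S := by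
    intro π h i
    rw [← h, blockS]
    exact Finset.mem_image_of_mem _ (Finset.mem_univ i)
  have mem2 : ∀ (π : Equiv.Perm (Fin (nx+ny))), blockS nx ny π = S →
      ∀ j : Fin ny, ¬ π (Fin.natAdd nx j) ∈ S := by
    intro π h j hmem
    rw [← h, blockS, Finset.mem_image] at hmem
    obtain ⟨i, _, hi⟩ := hmem
    have := π.injective hi
    have h1 := congrArg Fin.val this
    simp only [Fin.coe_castAdd, Fin.coe_natAdd] at h1
    omega
  -- forward maps
  let fwd1 : ∀ (π : Equiv.Perm (Fin (nx+ny))), blockS nx ny π = S → Equiv.Perm (Fin nx) :=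
    fun π h => Equiv.ofBijective (fun i => eSx.symm ⟨π (Fin.castAdd ny i), mem1 π h i⟩)
      ((Finite.injective_iff_bijective).mp (by
        intro a b hab
        have := eSx.symm.injective hab
        exact castAdd_inj (π.injective (Subtype.mk_eq_mk.mp this))))
  let fwd2 : ∀ (π : Equiv.Perm (Fin (nx+ny))), blockS nx ny π = S → Equiv.Perm (Fin ny) :=
    fun π h => Equiv.ofBijective (fun j => eSy.symm ⟨π (Fin.natAdd nx j), mem2 π h j⟩)
      ((Finite.injective_iff_bijective).mp (by
        intro a b hab
        have := eSy.symm.injective hab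
        have := π.injective (Subtype.mk_eq_mk.mp this)
        have h1 := congrArg Fin.val this
        simp only [Fin.coe_natAdd] at h1
        exact Fin.ext (by omega)))
  refine (Finset.card_bij'
    (t := (Finset.univ : Finset (Equiv.Perm (Fin nx) × Equiv.Perm (Fin ny))))
    (fun π h => (fwd1 π (by simpa using h), fwd2 π (by simpa using h)))
    (fun p _ => Φ p) ?_ ?_ ?_ ?_).trans ?_
  · intro π h; exact Finset.mem_univ _
  · intro p _; simp only [Finset.mem_filter, Finset.mem_univ, true_and]; exact hΦ_mem p
  · -- Φ (fwd π) = π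
    intro π h
    have h' : blockS nx ny π = S := by simpa using h
    apply Equiv.ext
    intro k
    rcases hk : finSumFinEquiv.symm k with i | j
    · have hk2 : k = Fin.castAdd ny i := by
        have := congrArg finSumFinEquiv hk
        simpa using this
      subst hk2
      rw [hΦ_castAdd]
      simp [fwd1, Equiv.ofBijective_apply]
    · have hk2 : k = Fin.natAdd nx j := by
        have := congrArg finSumFinEquiv hk
        simpa using this
      subst hk2
      rw [hΦ_natAdd]
      simp [fwd2, Equiv.ofBijective_apply]
  · -- fwd (Φ p) = p
    intro p _
    have h' := hΦ_mem p
    refine Prod.ext ?_ ?_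
    · apply Equiv.ext; intro i
      simp only [fwd1, Equiv.ofBijective_apply]
      have := hΦ_castAdd p i
      simp only [this]
      simp
    · apply Equiv.ext; intro j
      simp only [fwd2, Equiv.ofBijective_apply]
      have := hΦ_natAdd p j
      simp only [this]
      simp
  · simp [Fintype.card_prod, Fintype.card_perm, Fintype.card_fin]

/-- The set of admissible images -/
def TSet (nx ny m : ℕ) : Finset (Finset (Fin (nx + ny))) :=
  (Finset.powersetCard nx Finset.univ).filter
    (fun S => (S.filter (fun k : Fin (nx + ny) => (k : ℕ) < nx)).card = nx - m)

lemma TSet_card (nx ny m : ℕ) (hm : m ≤ min nx ny) :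
    (TSet nx ny m).card = Nat.choose nx m * Nat.choose ny m := by
  classical
  have hmx : m ≤ nx := le_trans hm (min_le_left _ _)
  have hmy : m ≤ ny := le_trans hm (min_le_right _ _)
  have key : (TSet nx ny m).card =
      ((Finset.powersetCard (nx - m) (Finset.univ : Finset (Fin nx))) ×ˢ
        (Finset.powersetCard m (Finset.univ : Finset (Fin ny)))).card := by
    refine Finset.card_bij'
      (fun S _ => (Finset.univ.filter (fun a : Fin nx => Fin.castAdd ny a ∈ S),
                   Finset.univ.filter (fun b : Fin ny => Fin.natAdd nx b ∈ S)))
      (fun p _ => p.1.image (Fin.castAdd ny) ∪ p.2.image (Fin.natAdd nx)) ?_ ?_ ?_ ?_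
    · -- forward membership
      intro S hS
      simp only [TSet, Finset.mem_filter, Finset.mem_powersetCard] at hS
      obtain ⟨⟨-, hcard⟩, hfilt⟩ := hS
      -- card of left component
      have hA : (Finset.univ.filter (fun a : Fin nx => Fin.castAdd ny a ∈ S)).card
          = (S.filter (fun k : Fin (nx + ny) => (k : ℕ) < nx)).card := by
        refine Finset.card_bij (fun (a : Fin nx) _ => Fin.castAdd ny a) ?_ ?_ ?_
        · intro a ha
          simp only [Finset.mem_filter, Finset.mem_univ, true_and] at ha
          simp only [Finset.mem_filter]
          exact ⟨ha, by simp⟩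
        · intro a _ b _ h; exact castAdd_inj h
        · intro k hk
          simp only [Finset.mem_filter] at hk
          refine ⟨⟨(k : ℕ), hk.2⟩, ?_, ?_⟩
          · simp only [Finset.mem_filter, Finset.mem_univ, true_and]
            have : Fin.castAdd ny (⟨(k : ℕ), hk.2⟩ : Fin nx) = k := Fin.ext rfl
            rw [this]; exact hk.1
          · exact Fin.ext rfl
      have hB : (Finset.univ.filter (fun b : Fin ny => Fin.natAdd nx b ∈ S)).card
          = (S.filter (fun k : Fin (nx + ny) => ¬ (k : ℕ) < nx)).card := by
        refine Finset.card_bij (fun (b : Fin ny) _ => Fin.natAdd nx b) ?_ ?_ ?_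
        · intro b hb
          simp only [Finset.mem_filter, Finset.mem_univ, true_and] at hb
          simp only [Finset.mem_filter]
          exact ⟨hb, by simp⟩
        · intro a _ b _ h
          have h1 := congrArg Fin.val h
          simp only [Fin.coe_natAdd] at h1
          exact Fin.ext (by omega)
        · intro k hk
          simp only [Finset.mem_filter, not_lt] at hk
          have hk2 : (k : ℕ) - nx < ny := by have := k.2; omega
          refine ⟨⟨(k : ℕ) - nx, hk2⟩, ?_, ?_⟩
          · simp only [Finset.mem_filter, Finset.mem_univ, true_and]
            have : Fin.natAdd nx (⟨(k : ℕ) - nx, hk2⟩ : Fin ny) = k :=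
              Fin.ext (by simp [Fin.coe_natAdd]; omega)
            rw [this]; exact hk.1
          · exact Fin.ext (by simp [Fin.coe_natAdd]; omega)
      have hsplit := Finset.card_filter_add_card_filter_not
        (s := S) (p := fun k => (k : ℕ) < nx)
      simp only [Finset.mem_product, Finset.mem_powersetCard]
      refine ⟨⟨Finset.subset_univ _, ?_⟩, Finset.subset_univ _, ?_⟩
      · rw [hA, hfilt]
      · rw [hB]; omega
    · -- backward membership
      intro p hp
      simp only [Finset.mem_product, Finset.mem_powersetCard] at hp
      obtain ⟨⟨-, h1⟩, -, h2⟩ := hp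
      have hdisj : Disjoint (p.1.image (Fin.castAdd ny)) (p.2.image (Fin.natAdd nx)) := by
        rw [Finset.disjoint_left]
        intro k hk1 hk2
        simp only [Finset.mem_image] at hk1 hk2
        obtain ⟨a, -, rfl⟩ := hk1
        obtain ⟨b, -, hb⟩ := hk2
        have h3 := congrArg Fin.val hb
        simp only [Fin.coe_natAdd, Fin.coe_castAdd] at h3
        have := a.2; omega
      have hfilt : (p.1.image (Fin.castAdd ny) ∪ p.2.image (Fin.natAdd nx)).filter
          (fun k : Fin (nx + ny) => (k : ℕ) < nx) = p.1.image (Fin.castAdd ny) := by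
        rw [Finset.filter_union]
        have e1 : (p.1.image (Fin.castAdd ny)).filter (fun k : Fin (nx + ny) => (k : ℕ) < nx)
            = p.1.image (Fin.castAdd ny) := by
          refine Finset.filter_true_of_mem ?_
          intro k hk
          simp only [Finset.mem_image] at hk
          obtain ⟨a, -, rfl⟩ := hk
          simpa using a.2
        have e2 : (p.2.image (Fin.natAdd nx)).filter (fun k : Fin (nx + ny) => (k : ℕ) < nx) = ∅ := by
          refine Finset.filter_false_of_mem ?_
          intro k hk
          simp only [Finset.mem_image] at hk
          obtain ⟨b, -, rfl⟩ := hk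
          simp
        rw [e1, e2, Finset.union_empty]
      simp only [TSet, Finset.mem_filter, Finset.mem_powersetCard]
      refine ⟨⟨Finset.subset_univ _, ?_⟩, ?_⟩
      · rw [Finset.card_union_of_disjoint hdisj,
          Finset.card_image_of_injective _ castAdd_inj,
          Finset.card_image_of_injective _ (fun a b h => by
            have h1 := congrArg Fin.val h
            simp only [Fin.coe_natAdd] at h1
            exact Fin.ext (by omega)), h1, h2]
        omega
      · rw [hfilt, Finset.card_image_of_injective _ castAdd_inj, h1]
    · -- left inverse
      intro S hS
      ext k
      simp only [Finset.mem_union, Finset.mem_image, Finset.mem_filter, Finset.mem_univ, true_and]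
      constructor
      · rintro (⟨a, ha, rfl⟩ | ⟨b, hb, rfl⟩)
        · exact ha
        · exact hb
      · intro hk
        by_cases hlt : (k : ℕ) < nx
        · left
          refine ⟨⟨(k : ℕ), hlt⟩, ?_, Fin.ext rfl⟩
          have : Fin.castAdd ny (⟨(k : ℕ), hlt⟩ : Fin nx) = k := Fin.ext rfl
          rw [this]; exact hk
        · right
          have hk2 : (k : ℕ) - nx < ny := by have := k.2; omega
          have heq : Fin.natAdd nx (⟨(k : ℕ) - nx, hk2⟩ : Fin ny) = k :=
            Fin.ext (by simp [Fin.coe_natAdd]; omega)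
          exact ⟨⟨(k : ℕ) - nx, hk2⟩, by rw [heq]; exact hk, heq⟩
    · -- right inverse
      intro p hp
      refine Prod.ext ?_ ?_
      · ext a
        simp only [Finset.mem_filter, Finset.mem_univ, true_and, Finset.mem_union,
          Finset.mem_image]
        constructor
        · rintro (⟨a', ha', h⟩ | ⟨b, hb, h⟩)
          · rwa [castAdd_inj h] at ha'
          · exfalso
            have h1 := congrArg Fin.val h
            simp only [Fin.coe_natAdd, Fin.coe_castAdd] at h1
            have := a.2; omega
        · intro ha; exact Or.inl ⟨a, ha, rfl⟩
      · ext b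
        simp only [Finset.mem_filter, Finset.mem_univ, true_and, Finset.mem_union,
          Finset.mem_image]
        constructor
        · rintro (⟨a, ha, h⟩ | ⟨b', hb', h⟩)
          · exfalso
            have h1 := congrArg Fin.val h
            simp only [Fin.coe_natAdd, Fin.coe_castAdd] at h1
            have := a.2; omega
          · have : b' = b := by
              have h1 := congrArg Fin.val h
              simp only [Fin.coe_natAdd] at h1
              exact Fin.ext (by omega)
            rwa [this] at hb'
        · intro hb; exact Or.inr ⟨b, hb, rfl⟩
  rw [key, Finset.card_product, Finset.card_powersetCard, Finset.card_powersetCard,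
    Finset.card_univ, Finset.card_univ, Fintype.card_fin, Fintype.card_fin,
    Nat.choose_symm hmx]

lemma blockS_filter_card (nx ny : ℕ) (π : Equiv.Perm (Fin (nx + ny))) :
    ((blockS nx ny π).filter (fun k : Fin (nx + ny) => (k : ℕ) < nx)).card
      = (Finset.univ.filter (fun i : Fin nx => ((π (Fin.castAdd ny i)) : ℕ) < nx)).card := by
  classical
  have h : (blockS nx ny π).filter (fun k : Fin (nx + ny) => (k : ℕ) < nx)
      = (Finset.univ.filter (fun i : Fin nx => ((π (Fin.castAdd ny i)) : ℕ) < nx)).image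
          (fun i => π (Fin.castAdd ny i)) := by
    ext k
    simp only [blockS, Finset.mem_filter, Finset.mem_image, Finset.mem_univ, true_and]
    constructor
    · rintro ⟨⟨i, rfl⟩, hlt⟩; exact ⟨i, hlt, rfl⟩
    · rintro ⟨i, hlt, rfl⟩; exact ⟨⟨i, rfl⟩, hlt⟩
  rw [h, Finset.card_image_of_injective _ (fun a b hab => castAdd_inj (π.injective hab))]

/-- the number of permutations at distance `m` equals
`C(nx, m) * C(ny, m) * nx! * ny!`. -/
theorem partition_card (nx ny : ℕ) (hx : 1 ≤ nx) (hy : 1 ≤ ny)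
    (m : ℕ) (hm : m ≤ min nx ny) :
    (PartM nx ny m).card
      = Nat.choose nx m * Nat.choose ny m * Nat.factorial nx * Nat.factorial ny := by
  classical
  have hmx : m ≤ nx := le_trans hm (min_le_left _ _)
  have hcle : ∀ π : Equiv.Perm (Fin (nx + ny)),
      (Finset.univ.filter (fun i : Fin nx => ((π (Fin.castAdd ny i)) : ℕ) < nx)).card ≤ nx := by
    intro π
    calc _ ≤ (Finset.univ : Finset (Fin nx)).card := Finset.card_filter_le _ _
    _ = nx := by simp
  have step1 : (PartM nx ny m).card
      = ∑ S ∈ TSet nx ny m,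
          ((PartM nx ny m).filter (fun π => blockS nx ny π = S)).card := by
    refine Finset.card_eq_sum_card_fiberwise ?_
    intro π (hπ : π ∈ PartM nx ny m)
    have hπ := (Finset.mem_filter.mp hπ).2
    simp only [pdist] at hπ
    simp only [Finset.mem_coe, TSet, Finset.mem_filter, Finset.mem_powersetCard]
    refine ⟨⟨Finset.subset_univ _, blockS_card π⟩, ?_⟩
    rw [blockS_filter_card]
    have := hcle π
    omega
  have step2 : ∀ S ∈ TSet nx ny m,
      ((PartM nx ny m).filter (fun π => blockS nx ny π = S))
        = Finset.univ.filter (fun π => blockS nx ny π = S) := by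
    intro S hS
    simp only [TSet, Finset.mem_filter, Finset.mem_powersetCard] at hS
    obtain ⟨⟨-, hcard⟩, hfilt⟩ := hS
    ext π
    simp only [PartM, Finset.mem_filter, Finset.mem_univ, true_and, and_iff_right_iff_imp]
    intro hb
    have h1 := blockS_filter_card nx ny π
    rw [hb, hfilt] at h1
    have := hcle π
    simp only [pdist]
    omega
  rw [step1]
  have step3 : ∀ S ∈ TSet nx ny m,
      ((PartM nx ny m).filter (fun π => blockS nx ny π = S)).card
        = Nat.factorial nx * Nat.factorial ny := by
    intro S hS
    rw [step2 S hS]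
    refine fiber_card S ?_
    simp only [TSet, Finset.mem_filter, Finset.mem_powersetCard] at hS
    exact hS.1.2
  rw [Finset.sum_congr rfl step3, Finset.sum_const, smul_eq_mul,
    TSet_card nx ny m hm]
  ring
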